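/- Let ℓ be a prime and m ≥ 0, n ≥ 1 integers. In GSp₄(ℚ_ℓ) one has the double coset decomposition B^{(1)}_{m,n} · diag(ℓ, ℓ, 1, 1) · B^{(1)}_{m,n} = ⋃_{x,y,z=0}^{ℓ−1} A(x,y,z) · B^{(1)}_{m,n}, where A(x,y,z) is the matrix with rows (ℓ, 0, x, y), (0, ℓ, z, x), (0, 0, 1, 0), (0, 0, 0, 1), and the ℓ³ listed left cosets are pairwise distinct. -/
import Mathlib


open Pointwise

noncomputable section

/-- The standard skew-symmetric matrix `J` defining `GSp₄`. -/
def Jmat (p : ℕ) [Fact p.Prime] : Matrix (Fin 4) (Fin 4) ℚ_[p] :=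
  !![0, 0, 0, 1; 0, 0, 1, 0; 0, -1, 0, 0; -1, 0, 0, 0]

/-- The subgroup `B^{(1)}_{m,n}` of `GSp₄(ℤ_ℓ)`: integral symplectic similitudes with
multiplier `μ ≡ 1 (mod ℓ^m)`, all entries below the diagonal divisible by `ℓⁿ`, and
(4,4)-entry `≡ 1 (mod ℓⁿ)`, viewed inside the 4×4 matrices over `ℚ_ℓ`. -/
def Bmn1 (p : ℕ) [Fact p.Prime] (m n : ℕ) : Set (Matrix (Fin 4) (Fin 4) ℚ_[p]) :=
  {g | (∀ i j, ‖g i j‖ ≤ 1) ∧ ‖g.det‖ = 1 ∧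
    (∃ μ : ℚ_[p], ‖μ‖ = 1 ∧ ‖μ - 1‖ ≤ (p : ℝ) ^ (-(m : ℤ)) ∧
      g.transpose * Jmat p * g = μ • Jmat p) ∧
    ‖g 1 0‖ ≤ (p : ℝ) ^ (-(n : ℤ)) ∧ ‖g 2 0‖ ≤ (p : ℝ) ^ (-(n : ℤ)) ∧
    ‖g 2 1‖ ≤ (p : ℝ) ^ (-(n : ℤ)) ∧ ‖g 3 0‖ ≤ (p : ℝ) ^ (-(n : ℤ)) ∧
    ‖g 3 1‖ ≤ (p : ℝ) ^ (-(n : ℤ)) ∧ ‖g 3 2‖ ≤ (p : ℝ) ^ (-(n : ℤ)) ∧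
    ‖g 3 3 - 1‖ ≤ (p : ℝ) ^ (-(n : ℤ))}

/-- The coset representatives `A(x,y,z)` for `0 ≤ x,y,z < ℓ`. -/
def rep8 (p : ℕ) [Fact p.Prime] :
    Fin p × Fin p × Fin p → Matrix (Fin 4) (Fin 4) ℚ_[p] :=
  fun i => !![(p : ℚ_[p]), 0, ((i.1 : ℕ) : ℚ_[p]), ((i.2.1 : ℕ) : ℚ_[p]);
              0, (p : ℚ_[p]), ((i.2.2 : ℕ) : ℚ_[p]), ((i.1 : ℕ) : ℚ_[p]);
              0, 0, 1, 0;
              0, 0, 0, 1]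

namespace Stmt8Aux

variable {p : ℕ} [Fact p.Prime]

/-! ### Real-number preliminaries -/

lemma pR_one_lt : (1 : ℝ) < p := by
  exact_mod_cast (Fact.out : p.Prime).one_lt

lemma pR_pos : (0 : ℝ) < p := lt_trans one_pos pR_one_lt

lemma eps_nonneg (n : ℕ) : 0 ≤ (p : ℝ) ^ (-(n : ℤ)) :=
  zpow_nonneg (le_of_lt pR_pos) _

lemma eps_le_one (n : ℕ) : (p : ℝ) ^ (-(n : ℤ)) ≤ 1 := by
  have := zpow_le_zpow_right₀ (le_of_lt (pR_one_lt (p := p))) (show -(n:ℤ) ≤ 0 by omega)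
  simpa using this

lemma eps_le_pinv {n : ℕ} (hn : 1 ≤ n) : (p : ℝ) ^ (-(n : ℤ)) ≤ (p : ℝ)⁻¹ := by
  have := zpow_le_zpow_right₀ (le_of_lt (pR_one_lt (p := p)))
    (show -(n:ℤ) ≤ -1 by omega)
  simpa [zpow_neg_one] using this

lemma pinv_lt_one : (p : ℝ)⁻¹ < 1 := by
  rw [inv_lt_one_iff₀]; right; exact pR_one_lt

lemma pinv_le_one : (p : ℝ)⁻¹ ≤ 1 := le_of_lt pinv_lt_one

/-! ### Padic norm preliminaries -/

lemma nm' {a b : ℚ_[p]} {C : ℝ} (ha : ‖a‖ ≤ 1) (hb : ‖b‖ ≤ C) : ‖a * b‖ ≤ C := by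
  rw [norm_mul]; nlinarith [norm_nonneg a, norm_nonneg b]

lemma nm'' {a b : ℚ_[p]} {C : ℝ} (ha : ‖a‖ ≤ C) (hb : ‖b‖ ≤ 1) : ‖a * b‖ ≤ C := by
  rw [norm_mul]; nlinarith [norm_nonneg a, norm_nonneg b]

lemma norm2 {a b : ℚ_[p]} {C : ℝ} (ha : ‖a‖ ≤ C) (hb : ‖b‖ ≤ C) : ‖a + b‖ ≤ C :=
  le_trans (Padic.nonarchimedean _ _) (max_le ha hb)

lemma normsub {a b : ℚ_[p]} {C : ℝ} (ha : ‖a‖ ≤ C) (hb : ‖b‖ ≤ C) : ‖a - b‖ ≤ C := by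
  rw [sub_eq_add_neg]; exact norm2 ha (by rwa [norm_neg])

lemma norm4 {a b c d : ℚ_[p]} {C : ℝ} (ha : ‖a‖ ≤ C) (hb : ‖b‖ ≤ C) (hc : ‖c‖ ≤ C)
    (hd : ‖d‖ ≤ C) : ‖a + b + c + d‖ ≤ C :=
  norm2 (norm2 (norm2 ha hb) hc) hd

lemma norm_eq_of_sub_lt {x y : ℚ_[p]} (h : ‖x - y‖ < ‖y‖) : ‖x‖ = ‖y‖ := by
  have h1 : ‖x‖ ≤ ‖y‖ := by
    have : x = y + (x - y) := by ring
    rw [this]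
    exact le_trans (Padic.nonarchimedean _ _) (max_le le_rfl (le_of_lt h))
  rcases eq_or_lt_of_le h1 with h2 | h2
  · exact h2
  · exfalso
    have : y = x - (x - y) := by ring
    have h3 : ‖y‖ ≤ max ‖x‖ ‖x - y‖ := by
      nth_rewrite 1 [this]
      rw [sub_eq_add_neg]
      exact le_trans (Padic.nonarchimedean _ _) (by rw [norm_neg])
    exact absurd h3 (not_le.mpr (max_lt h2 h))

lemma normNat (k : ℕ) : ‖(k : ℚ_[p])‖ ≤ 1 := by
  simpa using Padic.norm_int_le_one (p := p) (k : ℤ)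

lemma approx (t : ℚ_[p]) (ht : ‖t‖ ≤ 1) :
    ∃ x : ℕ, x < p ∧ ‖t - (x : ℚ_[p])‖ ≤ (p : ℝ)⁻¹ := by
  set t' : ℤ_[p] := ⟨t, ht⟩
  refine ⟨PadicInt.zmodRepr t', PadicInt.zmodRepr_lt_p t', ?_⟩
  have h := PadicInt.sub_zmodRepr_mem t'
  rw [PadicInt.maximalIdeal_eq_span_p, ← pow_one ((p : ℤ_[p])),
    ← PadicInt.norm_le_pow_iff_mem_span_pow] at h
  calc ‖t - (PadicInt.zmodRepr t' : ℚ_[p])‖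
      = ‖((t' - (PadicInt.zmodRepr t' : ℤ_[p]) : ℤ_[p]) : ℚ_[p])‖ := by push_cast; rfl
    _ ≤ (p : ℝ)⁻¹ := by
        rw [PadicInt.padic_norm_e_of_padicInt]
        simpa using h

/-! ### Matrix preliminaries -/

lemma mulE (a b : Matrix (Fin 4) (Fin 4) ℚ_[p]) (i j : Fin 4) :
    (a * b) i j = a i 0 * b 0 j + a i 1 * b 1 j + a i 2 * b 2 j + a i 3 * b 3 j := by
  rw [Matrix.mul_apply, Fin.sum_univ_four]

lemma sympl_entry (b : Matrix (Fin 4) (Fin 4) ℚ_[p]) (i j : Fin 4) :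
    (b.transpose * Jmat p * b) i j =
      b 0 i * b 3 j + b 1 i * b 2 j - b 2 i * b 1 j - b 3 i * b 0 j := by
  simp [Jmat, Matrix.mul_apply, Fin.sum_univ_four, Matrix.transpose_apply]
  ring

/-- diag(p,p,1,1). -/
def Dmat (p : ℕ) [Fact p.Prime] : Matrix (Fin 4) (Fin 4) ℚ_[p] :=
  Matrix.diagonal ![(p : ℚ_[p]), (p : ℚ_[p]), 1, 1]

lemma Dmat_eq : Dmat p = !![(p : ℚ_[p]),0,0,0; 0,(p : ℚ_[p]),0,0; 0,0,1,0; 0,0,0,1] := by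
  ext i j
  fin_cases i <;> fin_cases j <;>
    simp [Dmat, Matrix.diagonal, Matrix.vecHead, Matrix.vecTail]

/-- The unipotent matrix `U x y z`. -/
def Umat (x y z : ℚ_[p]) : Matrix (Fin 4) (Fin 4) ℚ_[p] :=
  !![1,0,x,y; 0,1,z,x; 0,0,1,0; 0,0,0,1]

lemma U_det (x y z : ℚ_[p]) : (Umat x y z).det = 1 := by
  rw [Matrix.det_of_upperTriangular]
  · simp [Umat, Fin.prod_univ_four, Matrix.vecHead, Matrix.vecTail]
  · intro i j hij
    fin_cases i <;> fin_cases j <;>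
      first | exact absurd hij (by decide) | simp [Umat, Matrix.vecHead, Matrix.vecTail]

lemma U_sympl (x y z : ℚ_[p]) :
    (Umat x y z).transpose * Jmat p * Umat x y z = (1 : ℚ_[p]) • Jmat p := by
  ext i j
  rw [sympl_entry]
  fin_cases i <;> fin_cases j <;>
    simp [Umat, Jmat, Matrix.vecHead, Matrix.vecTail] <;> ring

lemma U_mem (m n : ℕ) {x y z : ℚ_[p]} (hx : ‖x‖ ≤ 1) (hy : ‖y‖ ≤ 1) (hz : ‖z‖ ≤ 1) :
    Umat x y z ∈ Bmn1 p m n := by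
  refine ⟨?_, ?_, ⟨1, by simp, by simpa using eps_nonneg m, U_sympl x y z⟩,
    ?_, ?_, ?_, ?_, ?_, ?_, ?_⟩
  · intro i j
    fin_cases i <;> fin_cases j <;>
      simp [Umat, Matrix.vecHead, Matrix.vecTail] <;> assumption
  · rw [U_det]; simp
  all_goals simpa [Umat, Matrix.vecHead, Matrix.vecTail] using eps_nonneg n

lemma rep8_eq (i : Fin p × Fin p × Fin p) :
    rep8 p i = Umat ((i.1 : ℕ) : ℚ_[p]) ((i.2.1 : ℕ) : ℚ_[p]) ((i.2.2 : ℕ) : ℚ_[p]) *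
      Dmat p := by
  ext r s
  fin_cases r <;> fin_cases s <;>
    simp [rep8, Umat, Dmat_eq, mulE, Matrix.vecHead, Matrix.vecTail]

lemma rep8_det (i : Fin p × Fin p × Fin p) :
    (rep8 p i).det = (p : ℚ_[p]) * p := by
  rw [Matrix.det_of_upperTriangular]
  · simp [rep8, Fin.prod_univ_four, Matrix.vecHead, Matrix.vecTail]
  · intro r s hrs
    fin_cases r <;> fin_cases s <;>
      first | exact absurd hrs (by decide) | simp [rep8, Matrix.vecHead, Matrix.vecTail]

lemma rep8_sympl (i : Fin p × Fin p × Fin p) :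
    (rep8 p i).transpose * Jmat p * rep8 p i = (p : ℚ_[p]) • Jmat p := by
  ext r s
  rw [sympl_entry]
  fin_cases r <;> fin_cases s <;>
    simp [rep8, Jmat, Matrix.vecHead, Matrix.vecTail] <;> ring

lemma Dmat_det : (Dmat p).det = (p : ℚ_[p]) * p := by
  rw [Dmat, Matrix.det_diagonal]
  simp [Fin.prod_univ_four, Matrix.vecHead, Matrix.vecTail]

lemma Dmat_sympl :
    (Dmat p).transpose * Jmat p * Dmat p = (p : ℚ_[p]) • Jmat p := by
  ext r s
  rw [sympl_entry]
  fin_cases r <;> fin_cases s <;>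
    simp [Dmat_eq, Jmat, Matrix.vecHead, Matrix.vecTail] <;> ring

/-! ### Group-theoretic lemmas for `Bmn1` -/

lemma one_mem_B (m n : ℕ) : (1 : Matrix (Fin 4) (Fin 4) ℚ_[p]) ∈ Bmn1 p m n := by
  have h1 : (1 : Matrix (Fin 4) (Fin 4) ℚ_[p]) = Umat 0 0 0 := by
    ext i j
    fin_cases i <;> fin_cases j <;>
      simp [Umat, Matrix.one_apply, Matrix.vecHead, Matrix.vecTail]
  rw [h1]
  exact U_mem m n (by simp) (by simp) (by simp)

lemma mul_mem_B {m n : ℕ} {a b : Matrix (Fin 4) (Fin 4) ℚ_[p]}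
    (ha : a ∈ Bmn1 p m n) (hb : b ∈ Bmn1 p m n) : a * b ∈ Bmn1 p m n := by
  obtain ⟨ha1, ha2, ⟨μa, hμa1, hμa2, hμa3⟩, ha10, ha20, ha21, ha30, ha31, ha32, ha33⟩ := ha
  obtain ⟨hb1, hb2, ⟨μb, hμb1, hμb2, hμb3⟩, hb10, hb20, hb21, hb30, hb31, hb32, hb33⟩ := hb
  refine ⟨?_, ?_, ⟨μa * μb, ?_, ?_, ?_⟩, ?_, ?_, ?_, ?_, ?_, ?_, ?_⟩
  · intro i j; rw [mulE]
    exact norm4 (nm' (ha1 _ _) (hb1 _ _)) (nm' (ha1 _ _) (hb1 _ _))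
      (nm' (ha1 _ _) (hb1 _ _)) (nm' (ha1 _ _) (hb1 _ _))
  · rw [Matrix.det_mul, norm_mul, ha2, hb2, one_mul]
  · rw [norm_mul, hμa1, hμb1, one_mul]
  · have h : μa * μb - 1 = μa * (μb - 1) + (μa - 1) := by ring
    rw [h]
    exact norm2 (by rw [norm_mul, hμa1, one_mul]; exact hμb2) hμa2
  · have e1 : (a*b).transpose * Jmat p * (a*b)
        = b.transpose * (a.transpose * Jmat p * a) * b := by
      rw [Matrix.transpose_mul]; simp only [Matrix.mul_assoc]
    rw [e1, hμa3, Matrix.mul_smul, Matrix.smul_mul, hμb3, smul_smul]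
  · rw [mulE]
    exact norm4 (nm'' ha10 (hb1 _ _)) (nm' (ha1 _ _) hb10) (nm' (ha1 _ _) hb20)
      (nm' (ha1 _ _) hb30)
  · rw [mulE]
    exact norm4 (nm'' ha20 (hb1 _ _)) (nm' (ha1 _ _) hb10) (nm' (ha1 _ _) hb20)
      (nm' (ha1 _ _) hb30)
  · rw [mulE]
    exact norm4 (nm'' ha20 (hb1 _ _)) (nm'' ha21 (hb1 _ _)) (nm' (ha1 _ _) hb21)
      (nm' (ha1 _ _) hb31)
  · rw [mulE]
    exact norm4 (nm'' ha30 (hb1 _ _)) (nm' (ha1 _ _) hb10) (nm' (ha1 _ _) hb20)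
      (nm' (ha1 _ _) hb30)
  · rw [mulE]
    exact norm4 (nm'' ha30 (hb1 _ _)) (nm'' ha31 (hb1 _ _)) (nm' (ha1 _ _) hb21)
      (nm' (ha1 _ _) hb31)
  · rw [mulE]
    exact norm4 (nm'' ha30 (hb1 _ _)) (nm'' ha31 (hb1 _ _)) (nm'' ha32 (hb1 _ _))
      (nm' (ha1 _ _) hb32)
  · have h : (a*b) 3 3 - 1
        = a 3 0 * b 0 3 + a 3 1 * b 1 3 + a 3 2 * b 2 3
          + (a 3 3 * (b 3 3 - 1) + (a 3 3 - 1)) := by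
      rw [mulE]; ring
    rw [h]
    exact norm4 (nm'' ha30 (hb1 _ _)) (nm'' ha31 (hb1 _ _)) (nm'' ha32 (hb1 _ _))
      (norm2 (nm' (ha1 _ _) hb33) ha33)

end Stmt8Aux

namespace Stmt8Aux

variable {p : ℕ} [Fact p.Prime]

/-- The representative with general entries. -/
def repm (p : ℕ) [Fact p.Prime] (X Y Z : ℚ_[p]) : Matrix (Fin 4) (Fin 4) ℚ_[p] :=
  !![(p : ℚ_[p]), 0, X, Y; 0, (p : ℚ_[p]), Z, X; 0, 0, 1, 0; 0, 0, 0, 1]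

/-- The complementary matrix `c` with `repm X Y Z * c = b * D`. -/
def cmat (p : ℕ) [Fact p.Prime] (X Y Z : ℚ_[p]) (b : Matrix (Fin 4) (Fin 4) ℚ_[p]) :
    Matrix (Fin 4) (Fin 4) ℚ_[p] :=
  !![b 0 0 - X * b 2 0 - Y * b 3 0, b 0 1 - X * b 2 1 - Y * b 3 1,
      (b 0 2 - X * b 2 2 - Y * b 3 2) / p, (b 0 3 - X * b 2 3 - Y * b 3 3) / p;
     b 1 0 - Z * b 2 0 - X * b 3 0, b 1 1 - Z * b 2 1 - X * b 3 1,
      (b 1 2 - Z * b 2 2 - X * b 3 2) / p, (b 1 3 - Z * b 2 3 - X * b 3 3) / p;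
     (p : ℚ_[p]) * b 2 0, (p : ℚ_[p]) * b 2 1, b 2 2, b 2 3;
     (p : ℚ_[p]) * b 3 0, (p : ℚ_[p]) * b 3 1, b 3 2, b 3 3]

lemma hp0 : (p : ℚ_[p]) ≠ 0 :=
  Nat.cast_ne_zero.mpr (Fact.out : p.Prime).ne_zero

lemma hp1 : ‖(p : ℚ_[p])‖ ≤ 1 := by
  rw [Padic.norm_p]; exact pinv_le_one

lemma repm_mul_cmat (X Y Z : ℚ_[p]) (b : Matrix (Fin 4) (Fin 4) ℚ_[p]) :
    repm p X Y Z * cmat p X Y Z b = b * Dmat p := by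
  have h0 : (p : ℚ_[p]) ≠ 0 := hp0
  ext r s
  fin_cases r <;> fin_cases s <;>
    · try simp [repm, cmat, Dmat_eq, mulE, Matrix.vecHead, Matrix.vecTail]
      try field_simp
      try ring

lemma repm_det (X Y Z : ℚ_[p]) : (repm p X Y Z).det = (p : ℚ_[p]) * p := by
  rw [Matrix.det_of_upperTriangular]
  · simp [repm, Fin.prod_univ_four, Matrix.vecHead, Matrix.vecTail]
  · intro r s hrs
    fin_cases r <;> fin_cases s <;>
      first | exact absurd hrs (by decide) | simp [repm, Matrix.vecHead, Matrix.vecTail]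

lemma repm_sympl (X Y Z : ℚ_[p]) :
    (repm p X Y Z).transpose * Jmat p * repm p X Y Z = (p : ℚ_[p]) • Jmat p := by
  ext r s
  rw [sympl_entry]
  fin_cases r <;> fin_cases s <;>
    simp [repm, Jmat, Matrix.vecHead, Matrix.vecTail] <;> ring

lemma div_p_norm_le {t : ℚ_[p]} (h : ‖t‖ ≤ (p : ℝ)⁻¹) : ‖t / (p : ℚ_[p])‖ ≤ 1 := by
  rw [norm_div, Padic.norm_p, div_le_one (inv_pos.mpr pR_pos)]
  exact h

lemma key {m n : ℕ} (hn : 1 ≤ n) {b : Matrix (Fin 4) (Fin 4) ℚ_[p]}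
    (hb : b ∈ Bmn1 p m n) :
    ∃ i : Fin p × Fin p × Fin p, ∃ c ∈ Bmn1 p m n, b * Dmat p = rep8 p i * c := by
  obtain ⟨hb1, hb2, ⟨μ, hμ1, hμ2, hμ3⟩, h10, h20, h21, h30, h31, h32, h33⟩ := hb
  have hple : ∀ g : ℚ_[p], ‖g‖ ≤ (p:ℝ)^(-(n:ℤ)) → ‖g‖ ≤ (p:ℝ)⁻¹ :=
    fun g hg => le_trans hg (eps_le_pinv hn)
  -- b 3 3 is a unit
  have hb33 : ‖b 3 3‖ = 1 := by
    have := norm_eq_of_sub_lt (x := b 3 3) (y := 1)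
      (by rw [norm_one]; exact lt_of_le_of_lt (hple _ h33) pinv_lt_one)
    simpa using this
  have hb33ne : b 3 3 ≠ 0 := by
    intro h; rw [h, norm_zero] at hb33; norm_num at hb33
  -- symplectic relations
  have hR12 := congrFun (congrFun hμ3 1) 2
  rw [sympl_entry] at hR12
  simp only [Matrix.smul_apply, smul_eq_mul] at hR12
  rw [show Jmat p 1 2 = 1 by simp [Jmat], mul_one] at hR12
  have hR23 := congrFun (congrFun hμ3 2) 3
  rw [sympl_entry] at hR23
  simp only [Matrix.smul_apply, smul_eq_mul] at hR23
  rw [show Jmat p 2 3 = 0 by simp [Jmat, Matrix.vecHead, Matrix.vecTail], mul_zero] at hR23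
  -- b 2 2 is a unit
  have hb22 : ‖b 2 2‖ = 1 := by
    have hprod : ‖b 1 1 * b 2 2‖ = 1 := by
      have hlt : ‖b 1 1 * b 2 2 - μ‖ < ‖μ‖ := by
        rw [show b 1 1 * b 2 2 - μ
            = -(b 0 1 * b 3 2) + b 2 1 * b 1 2 + b 3 1 * b 0 2 from by
          linear_combination hR12, hμ1]
        refine lt_of_le_of_lt (norm2 (norm2 ?_ ?_) ?_) (pinv_lt_one (p := p))
        · rw [norm_neg]; exact hple _ (nm' (hb1 0 1) h32)
        · exact hple _ (nm'' h21 (hb1 1 2))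
        · exact hple _ (nm'' h31 (hb1 0 2))
      rw [norm_eq_of_sub_lt hlt, hμ1]
    rw [norm_mul] at hprod
    have g1 := hb1 1 1
    have g2 := hb1 2 2
    have g3 := norm_nonneg (b 1 1)
    have g4 := norm_nonneg (b 2 2)
    nlinarith
  have hb22ne : b 2 2 ≠ 0 := by
    intro h; rw [h, norm_zero] at hb22; norm_num at hb22
  -- choose the residues x, y, z
  obtain ⟨xn, hxp, hxa⟩ := approx (b 0 2 * (b 2 2)⁻¹)
    (by rw [norm_mul, norm_inv, hb22]; simpa using hb1 0 2)
  obtain ⟨zn, hzp, hza⟩ := approx (b 1 2 * (b 2 2)⁻¹)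
    (by rw [norm_mul, norm_inv, hb22]; simpa using hb1 1 2)
  have hX : ‖b 0 2 - (xn : ℚ_[p]) * b 2 2‖ ≤ (p:ℝ)⁻¹ := by
    rw [show b 0 2 - (xn : ℚ_[p]) * b 2 2 = (b 0 2 * (b 2 2)⁻¹ - xn) * b 2 2 from by
      field_simp <;> ring, norm_mul, hb22, mul_one]
    exact hxa
  have hZ : ‖b 1 2 - (zn : ℚ_[p]) * b 2 2‖ ≤ (p:ℝ)⁻¹ := by
    rw [show b 1 2 - (zn : ℚ_[p]) * b 2 2 = (b 1 2 * (b 2 2)⁻¹ - zn) * b 2 2 from by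
      field_simp <;> ring, norm_mul, hb22, mul_one]
    exact hza
  obtain ⟨yn, hyp, hya⟩ := approx ((b 0 3 - (xn : ℚ_[p]) * b 2 3) * (b 3 3)⁻¹)
    (by
      rw [norm_mul, norm_inv, hb33, inv_one, mul_one]
      exact normsub (hb1 0 3) (nm' (normNat xn) (hb1 2 3)))
  have hY : ‖b 0 3 - (xn : ℚ_[p]) * b 2 3 - (yn : ℚ_[p]) * b 3 3‖ ≤ (p:ℝ)⁻¹ := by
    rw [show b 0 3 - (xn : ℚ_[p]) * b 2 3 - (yn : ℚ_[p]) * b 3 3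
        = ((b 0 3 - (xn : ℚ_[p]) * b 2 3) * (b 3 3)⁻¹ - yn) * b 3 3 from by
      field_simp <;> ring, norm_mul, hb33, mul_one]
    exact hya
  have hW : ‖b 1 3 - (zn : ℚ_[p]) * b 2 3 - (xn : ℚ_[p]) * b 3 3‖ ≤ (p:ℝ)⁻¹ := by
    have e : ‖b 1 3 - (zn : ℚ_[p]) * b 2 3 - (xn : ℚ_[p]) * b 3 3‖
        = ‖b 2 2 * (b 1 3 - (zn : ℚ_[p]) * b 2 3 - (xn : ℚ_[p]) * b 3 3)‖ := by
      rw [norm_mul, hb22, one_mul]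
    rw [e, show b 2 2 * (b 1 3 - (zn : ℚ_[p]) * b 2 3 - (xn : ℚ_[p]) * b 3 3)
        = b 3 3 * (b 0 2 - (xn : ℚ_[p]) * b 2 2)
          + b 2 3 * (b 1 2 - (zn : ℚ_[p]) * b 2 2) - b 3 2 * b 0 3 from by
      linear_combination -hR23]
    exact normsub (norm2 (nm' (hb1 3 3) hX) (nm' (hb1 2 3) hZ))
      (hple _ (nm'' h32 (hb1 0 3)))
  -- assemble
  refine ⟨(⟨xn, hxp⟩, ⟨yn, hyp⟩, ⟨zn, hzp⟩),
    cmat p (xn : ℚ_[p]) (yn : ℚ_[p]) (zn : ℚ_[p]) b, ?_, ?_⟩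
  swap
  · exact (repm_mul_cmat _ _ _ b).symm
  have hXn : ‖((xn : ℕ) : ℚ_[p])‖ ≤ 1 := normNat xn
  have hYn : ‖((yn : ℕ) : ℚ_[p])‖ ≤ 1 := normNat yn
  have hZn : ‖((zn : ℕ) : ℚ_[p])‖ ≤ 1 := normNat zn
  -- membership of c in Bmn1
  have hAc := repm_mul_cmat (p := p) (xn : ℚ_[p]) (yn : ℚ_[p]) (zn : ℚ_[p]) b
  set c := cmat p (xn : ℚ_[p]) (yn : ℚ_[p]) (zn : ℚ_[p]) b with hc
  have hdetc : c.det = b.det := by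
    have hd := congrArg Matrix.det hAc
    rw [Matrix.det_mul, Matrix.det_mul, repm_det, Dmat_det] at hd
    exact mul_left_cancel₀ (mul_ne_zero hp0 hp0) (by linear_combination hd)
  have hsymc : c.transpose * Jmat p * c = μ • Jmat p := by
    have e0 : (repm p (xn : ℚ_[p]) (yn : ℚ_[p]) (zn : ℚ_[p]) * c).transpose * Jmat p *
        (repm p (xn : ℚ_[p]) (yn : ℚ_[p]) (zn : ℚ_[p]) * c)
        = (b * Dmat p).transpose * Jmat p * (b * Dmat p) := by rw [hAc]
    have e1 : (repm p (xn : ℚ_[p]) (yn : ℚ_[p]) (zn : ℚ_[p]) * c).transpose * Jmat p *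
        (repm p (xn : ℚ_[p]) (yn : ℚ_[p]) (zn : ℚ_[p]) * c)
        = (p : ℚ_[p]) • (c.transpose * Jmat p * c) := by
      rw [show (repm p (xn : ℚ_[p]) (yn : ℚ_[p]) (zn : ℚ_[p]) * c).transpose * Jmat p *
          (repm p (xn : ℚ_[p]) (yn : ℚ_[p]) (zn : ℚ_[p]) * c)
          = c.transpose * ((repm p (xn : ℚ_[p]) (yn : ℚ_[p]) (zn : ℚ_[p])).transpose *
            Jmat p * repm p (xn : ℚ_[p]) (yn : ℚ_[p]) (zn : ℚ_[p])) * c from by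
        rw [Matrix.transpose_mul]; simp only [Matrix.mul_assoc]]
      rw [repm_sympl, Matrix.mul_smul, Matrix.smul_mul]
      try simp only [Matrix.mul_assoc]
    have e2 : (b * Dmat p).transpose * Jmat p * (b * Dmat p)
        = (p : ℚ_[p]) • (μ • Jmat p) := by
      rw [show (b * Dmat p).transpose * Jmat p * (b * Dmat p)
          = (Dmat p).transpose * (b.transpose * Jmat p * b) * Dmat p from by
        rw [Matrix.transpose_mul]; simp only [Matrix.mul_assoc]]
      rw [hμ3, Matrix.mul_smul, Matrix.smul_mul, Dmat_sympl, smul_smul, smul_smul,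
        mul_comm μ ((p : ℚ_[p]))]
    have hps : (p : ℚ_[p]) • (c.transpose * Jmat p * c) = (p : ℚ_[p]) • (μ • Jmat p) := by
      rw [← e1, e0, e2]
    have h' := congrArg (fun M : Matrix (Fin 4) (Fin 4) ℚ_[p] => (p : ℚ_[p])⁻¹ • M) hps
    simpa [inv_smul_smul₀ (hp0 (p := p))] using h'
  refine ⟨?_, ?_, ⟨μ, hμ1, hμ2, hsymc⟩, ?_, ?_, ?_, ?_, ?_, ?_, ?_⟩
  · intro r s
    fin_cases r <;> fin_cases s
    · exact normsub (normsub (hb1 0 0) (nm' hXn (hb1 2 0))) (nm' hYn (hb1 3 0))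
    · exact normsub (normsub (hb1 0 1) (nm' hXn (hb1 2 1))) (nm' hYn (hb1 3 1))
    · exact div_p_norm_le (normsub hX (hple _ (nm' hYn h32)))
    · exact div_p_norm_le hY
    · exact normsub (normsub (hb1 1 0) (nm' hZn (hb1 2 0))) (nm' hXn (hb1 3 0))
    · exact normsub (normsub (hb1 1 1) (nm' hZn (hb1 2 1))) (nm' hXn (hb1 3 1))
    · exact div_p_norm_le (normsub hZ (hple _ (nm' hXn h32)))
    · exact div_p_norm_le hW
    · exact nm' hp1 (hb1 2 0)
    · exact nm' hp1 (hb1 2 1)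
    · exact hb1 2 2
    · exact hb1 2 3
    · exact nm' hp1 (hb1 3 0)
    · exact nm' hp1 (hb1 3 1)
    · exact hb1 3 2
    · exact hb1 3 3
  · rw [hdetc]; exact hb2
  · exact normsub (normsub h10 (nm' hZn h20)) (nm' hXn h30)
  · exact nm' hp1 h20
  · exact nm' hp1 h21
  · exact nm' hp1 h30
  · exact nm' hp1 h31
  · exact h32
  · exact h33

end Stmt8Aux

namespace Stmt8Aux

variable {p : ℕ} [Fact p.Prime]

lemma fin_eq_of_close {a b : Fin p}
    (h : ‖((a : ℕ) : ℚ_[p]) - ((b : ℕ) : ℚ_[p])‖ ≤ (p : ℝ)⁻¹) : a = b := by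
  have h' : ‖((((a : ℕ) : ℤ) - ((b : ℕ) : ℤ) : ℤ) : ℚ_[p])‖ ≤ (p : ℝ) ^ (-(1 : ℕ) : ℤ) := by
    push_cast
    simpa [zpow_neg_one] using h
  rw [Padic.norm_int_le_pow_iff_dvd, pow_one] at h'
  obtain ⟨k, hk⟩ := h'
  have hpz : (0 : ℤ) < p := by exact_mod_cast (Fact.out : p.Prime).pos
  have ha : ((a : ℕ) : ℤ) < p := by exact_mod_cast a.isLt
  have hb : ((b : ℕ) : ℤ) < p := by exact_mod_cast b.isLt
  have ha0 : (0 : ℤ) ≤ ((a : ℕ) : ℤ) := by positivity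
  have hb0 : (0 : ℤ) ≤ ((b : ℕ) : ℤ) := by positivity
  have hk0 : k = 0 := by
    rcases lt_trichotomy k 0 with hlt | he | hgt
    · have : (p : ℤ) * k ≤ p * (-1) := mul_le_mul_of_nonneg_left (by omega) (le_of_lt hpz)
      linarith
    · exact he
    · have : (p : ℤ) * 1 ≤ p * k := mul_le_mul_of_nonneg_left (by omega) (le_of_lt hpz)
      linarith
  rw [hk0, mul_zero, sub_eq_zero] at hk
  have : (a : ℕ) = (b : ℕ) := by exact_mod_cast hk
  exact Fin.ext this

lemma inj_aux {m n : ℕ} (hn : 1 ≤ n) {b : Matrix (Fin 4) (Fin 4) ℚ_[p]}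
    (hb : b ∈ Bmn1 p m n) {i j : Fin p × Fin p × Fin p}
    (h : rep8 p j * b = rep8 p i) : i = j := by
  obtain ⟨hb1, -, -, -, -, -, -, -, -, -⟩ := hb
  -- row 2 and row 3 of b
  have h22 : b 2 2 = 1 := by
    have := congrFun (congrFun h 2) 2
    rw [mulE] at this
    simpa [rep8, Matrix.vecHead, Matrix.vecTail] using this
  have h32 : b 3 2 = 0 := by
    have := congrFun (congrFun h 3) 2
    rw [mulE] at this
    simpa [rep8, Matrix.vecHead, Matrix.vecTail] using this
  have h23 : b 2 3 = 0 := by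
    have := congrFun (congrFun h 2) 3
    rw [mulE] at this
    simpa [rep8, Matrix.vecHead, Matrix.vecTail] using this
  have h33 : b 3 3 = 1 := by
    have := congrFun (congrFun h 3) 3
    rw [mulE] at this
    simpa [rep8, Matrix.vecHead, Matrix.vecTail] using this
  have e02 := congrFun (congrFun h 0) 2
  rw [mulE] at e02
  simp [rep8, Matrix.vecHead, Matrix.vecTail] at e02
  have e03 := congrFun (congrFun h 0) 3
  rw [mulE] at e03
  simp [rep8, Matrix.vecHead, Matrix.vecTail] at e03
  have e12 := congrFun (congrFun h 1) 2
  rw [mulE] at e12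
  simp [rep8, Matrix.vecHead, Matrix.vecTail] at e12
  rw [h22, h32] at e02
  rw [h23, h33] at e03
  rw [h22, h32] at e12
  have hx : ((i.1 : ℕ) : ℚ_[p]) - ((j.1 : ℕ) : ℚ_[p]) = (p : ℚ_[p]) * b 0 2 := by
    linear_combination -e02
  have hy : ((i.2.1 : ℕ) : ℚ_[p]) - ((j.2.1 : ℕ) : ℚ_[p]) = (p : ℚ_[p]) * b 0 3 := by
    linear_combination -e03
  have hz : ((i.2.2 : ℕ) : ℚ_[p]) - ((j.2.2 : ℕ) : ℚ_[p]) = (p : ℚ_[p]) * b 1 2 := by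
    linear_combination -e12
  have bound : ∀ g : ℚ_[p], ‖g‖ ≤ 1 → ‖(p : ℚ_[p]) * g‖ ≤ (p : ℝ)⁻¹ := by
    intro g hg
    rw [norm_mul, Padic.norm_p]
    exact mul_le_of_le_one_right (by positivity) hg
  have h1 : i.1 = j.1 := fin_eq_of_close (by rw [hx]; exact bound _ (hb1 0 2))
  have h2 : i.2.1 = j.2.1 := fin_eq_of_close (by rw [hy]; exact bound _ (hb1 0 3))
  have h3 : i.2.2 = j.2.2 := fin_eq_of_close (by rw [hz]; exact bound _ (hb1 1 2))
  exact Prod.ext h1 (Prod.ext h2 h3)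

end Stmt8Aux

open Stmt8Aux in
/-- Double coset decomposition of `B^{(1)}_{m,n} · diag(ℓ,ℓ,1,1) · B^{(1)}_{m,n}` into
`ℓ³` pairwise distinct left cosets. -/
theorem stmt8 (p : ℕ) [Fact p.Prime] (m n : ℕ) (hn : 1 ≤ n) :
    (Bmn1 p m n * {Matrix.diagonal ![(p : ℚ_[p]), (p : ℚ_[p]), 1, 1]} * Bmn1 p m n =
      ⋃ i : Fin p × Fin p × Fin p,
        ({rep8 p i} : Set (Matrix (Fin 4) (Fin 4) ℚ_[p])) * Bmn1 p m n) ∧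
    Function.Injective
      (fun i : Fin p × Fin p × Fin p =>
        ({rep8 p i} : Set (Matrix (Fin 4) (Fin 4) ℚ_[p])) * Bmn1 p m n) := by
  constructor
  · apply Set.Subset.antisymm
    · rintro g hg
      rw [Set.mem_mul] at hg
      obtain ⟨u, hu, b2, hb2, rfl⟩ := hg
      rw [Set.mem_mul] at hu
      obtain ⟨b1, hb1, d, hd, rfl⟩ := hu
      rw [Set.mem_singleton_iff] at hd
      subst hd
      obtain ⟨i, c, hc, heq⟩ := key hn hb1
      refine Set.mem_iUnion.mpr ⟨i, ?_⟩
      rw [Set.mem_mul]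
      refine ⟨rep8 p i, rfl, c * b2, mul_mem_B hc hb2, ?_⟩
      rw [← mul_assoc, ← heq]
      rfl
    · rintro g hg
      obtain ⟨i, hgi⟩ := Set.mem_iUnion.mp hg
      rw [Set.mem_mul] at hgi
      obtain ⟨r, hr, b, hb, rfl⟩ := hgi
      rw [Set.mem_singleton_iff] at hr
      subst hr
      rw [Set.mem_mul]
      refine ⟨Umat ((i.1 : ℕ) : ℚ_[p]) ((i.2.1 : ℕ) : ℚ_[p]) ((i.2.2 : ℕ) : ℚ_[p]) * Dmat p,
        ?_, b, hb, ?_⟩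
      · rw [Set.mem_mul]
        exact ⟨Umat _ _ _, U_mem m n (normNat _) (normNat _) (normNat _), Dmat p, rfl, rfl⟩
      · rw [← rep8_eq]
  · intro i j hval
    have h1 : rep8 p i ∈ ({rep8 p i} : Set (Matrix (Fin 4) (Fin 4) ℚ_[p])) * Bmn1 p m n := by
      rw [Set.mem_mul]
      exact ⟨rep8 p i, rfl, 1, one_mem_B m n, mul_one _⟩
    have hval' : ({rep8 p i} : Set (Matrix (Fin 4) (Fin 4) ℚ_[p])) * Bmn1 p m n =
        ({rep8 p j} : Set (Matrix (Fin 4) (Fin 4) ℚ_[p])) * Bmn1 p m n := hval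
    rw [hval'] at h1
    rw [Set.mem_mul] at h1
    obtain ⟨r, hr, b, hb, heq⟩ := h1
    rw [Set.mem_singleton_iff] at hr
    subst hr
    exact inj_aux hn hb heq
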